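/- For positive semidefinite Hermitian matrices A, B ∈ ℂ^{n×n}, det(I + A + B) ≤ det(I + A) · det(I + B). -/

import Mathlib

open scoped ComplexOrder
open Matrix
open scoped MatrixOrder

/-- For PSD `R`, `1 ≤ det (1 + R)`. -/
lemma one_le_det_one_add_aux {n : ℕ} {R : Matrix (Fin n) (Fin n) ℂ}
    (hR : R.PosSemidef) : (1 : ℂ) ≤ (1 + R).det := by
  have h : (1 + R).PosSemidef := Matrix.PosSemidef.one.add hR
  rw [h.1.det_eq_prod_eigenvalues]
  have key : ∀ i, (1 : ℝ) ≤ h.1.eigenvalues i := by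
    intro i
    have hv := h.1.eigenvectorBasis.orthonormal.1 i
    rw [h.1.eigenvalues_eq i]
    have hvd : dotProduct (star ⇑(h.1.eigenvectorBasis i))
        ((1 : Matrix (Fin n) (Fin n) ℂ) *ᵥ ⇑(h.1.eigenvectorBasis i)) = 1 := by
      rw [Matrix.one_mulVec, dotProduct_comm, ← EuclideanSpace.inner_eq_star_dotProduct,
        inner_self_eq_norm_sq_to_K, hv]
      norm_num
    rw [Matrix.add_mulVec, dotProduct_add, map_add, hvd]
    have := hR.re_dotProduct_nonneg ⇑(h.1.eigenvectorBasis i)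
    simpa using this
  have : (1 : ℝ) ≤ ∏ i, h.1.eigenvalues i := by
    calc (1 : ℝ) = ∏ _i : Fin n, (1 : ℝ) := by simp
      _ ≤ ∏ i, h.1.eigenvalues i :=
          Finset.prod_le_prod (fun i _ => zero_le_one) (fun i _ => key i)
  calc (1 : ℂ) = ((1 : ℝ) : ℂ) := by norm_num
    _ ≤ ((∏ i, h.1.eigenvalues i : ℝ) : ℂ) := by
        exact_mod_cast this
    _ = ∏ i, (h.1.eigenvalues i : ℂ) := by push_cast; ring

/-- Monotonicity of determinant: if `P` is PD and `Q - P` is PSD then `det P ≤ det Q`. -/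
lemma det_le_det_aux {n : ℕ} {P Q : Matrix (Fin n) (Fin n) ℂ}
    (hP : P.PosDef) (hPQ : (Q - P).PosSemidef) : P.det ≤ Q.det := by
  set S := CFC.sqrt P with hSdef
  have hS : S.PosSemidef := (CFC.sqrt_nonneg P).posSemidef
  have hSS : S * S = P := CFC.sqrt_mul_sqrt_self P hP.posSemidef.nonneg
  have hSdet : IsUnit S.det := by
    have h2 : S.det * S.det = P.det := by rw [← Matrix.det_mul, hSS]
    have hPdet : P.det ≠ 0 := hP.det_pos.ne'
    exact Ne.isUnit fun hc => hPdet (by rw [← h2, hc, zero_mul])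
  have hSinv : S * S⁻¹ = 1 := Matrix.mul_nonsing_inv S hSdet
  have hSinv' : S⁻¹ * S = 1 := Matrix.nonsing_inv_mul S hSdet
  have hSinvH : (S⁻¹)ᴴ = S⁻¹ := by
    rw [Matrix.conjTranspose_nonsing_inv, hS.1.eq]
  set C := S⁻¹ * (Q - P) * S⁻¹ with hCdef
  have hC : C.PosSemidef := by
    have := hPQ.conjTranspose_mul_mul_same S⁻¹
    rwa [hSinvH] at this
  have hQ : Q = S * (1 + C) * S := by
    rw [hCdef]
    rw [Matrix.mul_add, Matrix.mul_one, Matrix.add_mul]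
    rw [hSS]
    rw [show S * (S⁻¹ * (Q - P) * S⁻¹) * S = (S * S⁻¹) * (Q - P) * (S⁻¹ * S) by
      noncomm_ring]
    rw [hSinv, hSinv', Matrix.one_mul, Matrix.mul_one]
    abel
  have hdet : Q.det = P.det * (1 + C).det := by
    rw [hQ, Matrix.det_mul, Matrix.det_mul, mul_comm S.det, mul_assoc,
      ← Matrix.det_mul, hSS]
    ring
  rw [hdet]
  calc P.det = P.det * 1 := by ring
    _ ≤ P.det * (1 + C).det :=
        mul_le_mul_of_nonneg_left (one_le_det_one_add_aux hC) hP.det_pos.le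

/-- for PSD Hermitian `A, B : ℂ^{n×n}`,
`det(I + A + B) ≤ det(I + A) · det(I + B)`. -/
theorem det_one_add_add_le {n : ℕ} (A B : Matrix (Fin n) (Fin n) ℂ)
    (hA : A.PosSemidef) (hB : B.PosSemidef) :
    (1 + A + B).det ≤ (1 + A).det * (1 + B).det := by
  have h1A : (1 + A).PosDef := Matrix.PosDef.one.add_posSemidef hA
  have h1Aunit : IsUnit (1 + A).det := h1A.det_pos.ne'.isUnit
  have hmul : (1 + A) * (1 + A)⁻¹ = 1 := Matrix.mul_nonsing_inv _ h1Aunit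
  have hmul' : (1 + A)⁻¹ * (1 + A) = 1 := Matrix.nonsing_inv_mul _ h1Aunit
  have hinvH : ((1 + A)⁻¹)ᴴ = (1 + A)⁻¹ := by
    rw [Matrix.conjTranspose_nonsing_inv, h1A.isHermitian.eq]
  set T := CFC.sqrt B with hTdef
  have hT : T.PosSemidef := (CFC.sqrt_nonneg B).posSemidef
  have hTT : T * T = B := CFC.sqrt_mul_sqrt_self B hB.nonneg
  -- factor: 1 + A + B = (1+A) * (1 + (1+A)⁻¹ * B)
  have hfac : 1 + A + B = (1 + A) * (1 + (1 + A)⁻¹ * B) := by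
    rw [Matrix.mul_add, Matrix.mul_one, ← Matrix.mul_assoc, hmul, Matrix.one_mul]
  set C := T * (1 + A)⁻¹ * T with hCdef
  have hswap : (1 + (1 + A)⁻¹ * B).det = (1 + C).det := by
    rw [← hTT, ← Matrix.mul_assoc, Matrix.det_one_add_mul_comm, hCdef, Matrix.mul_assoc]
  have hC : C.PosSemidef := by
    have := (h1A.inv.posSemidef).conjTranspose_mul_mul_same T
    rwa [hT.1.eq] at this
  -- B - C is PSD
  have hBC : (B - C).PosSemidef := by
    have hE : ((1 : Matrix (Fin n) (Fin n) ℂ) - (1 + A)⁻¹).PosSemidef := by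
      have hD : (A + A * A).PosSemidef := by
        have : (Aᴴ * A).PosSemidef := Matrix.posSemidef_conjTranspose_mul_self A
        rw [hA.1.eq] at this
        exact hA.add this
      have h1 := hD.conjTranspose_mul_mul_same (1 + A)⁻¹
      rw [hinvH] at h1
      have heq : (1 + A)⁻¹ * (A + A * A) * (1 + A)⁻¹
          = 1 - (1 + A)⁻¹ := by
        have e1 : (1 + A)⁻¹ * (A + A * A) * (1 + A)⁻¹
            = (1 + A)⁻¹ * A * ((1 + A) * (1 + A)⁻¹) := by noncomm_ring
        rw [e1, hmul, Matrix.mul_one]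
        have h3 : (1 + A)⁻¹ * 1 + (1 + A)⁻¹ * A = 1 := by
          rw [← Matrix.mul_add]; exact hmul'
        rw [Matrix.mul_one] at h3
        exact eq_sub_of_add_eq' h3
      rwa [heq] at h1
    have h1 := hE.conjTranspose_mul_mul_same T
    rw [hT.1.eq] at h1
    have heq : T * (1 - (1 + A)⁻¹) * T = B - C := by
      rw [Matrix.mul_sub, Matrix.mul_one, Matrix.sub_mul, hTT, hCdef]
    rwa [heq] at h1
  have hPD : (1 + C).PosDef := Matrix.PosDef.one.add_posSemidef hC
  have hdiff : ((1 + B) - (1 + C)).PosSemidef := by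
    have : (1 + B) - (1 + C) = B - C := by abel
    rwa [this]
  have hmono : (1 + C).det ≤ (1 + B).det := det_le_det_aux hPD hdiff
  rw [hfac, Matrix.det_mul, hswap]
  exact mul_le_mul_of_nonneg_left hmono h1A.det_pos.le
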